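/- If a weight matrix W̃ is a Darboux transformation of W via D = VN ∈ D(W), then the operator D̃ = NV belongs to D(W̃), and consequently W is a Darboux transformation of W̃. -/

import Mathlib

open Polynomial Matrix MeasureTheory
open scoped ComplexOrder

/-- Matrix polynomials: square matrices with polynomial entries. -/
abbrev MatP (n : Type*) := Matrix n n (Polynomial ℂ)

section MatFramework
variable {n : Type*} [Fintype n] [DecidableEq n]

/-- Entrywise `j`-th derivative of a matrix polynomial. -/
noncomputable def derivIter (j : ℕ) (P : MatP n) : MatP n :=
  P.map (fun p => Polynomial.derivative^[j] p)

/-- Right action of the differential operator `∑_j ∂^j F j` on a matrix polynomial: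
`P · D = ∑_j P^{(j)} F_j`. -/
noncomputable def actOp (F : ℕ →₀ MatP n) (P : MatP n) : MatP n :=
  F.sum fun j Fj => derivIter j P * Fj

/-- A map on matrix polynomials is a matrix differential operator with polynomial
coefficients if it is given by some `∑_j ∂^j F_j`. -/
def IsDiffOp (L : MatP n → MatP n) : Prop :=
  ∃ F : ℕ →₀ MatP n, ∀ P, L P = actOp F P

/-- Degree of a matrix polynomial: the sup of the degrees of its entries. -/
noncomputable def matDeg (P : MatP n) : WithBot ℕ :=
  Finset.univ.sup fun ij : n × n => (P ij.1 ij.2).degree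

/-- A differential operator is degree-preserving if `deg (P · V) = deg P` for all `P`. -/
def DegPres (L : MatP n → MatP n) : Prop :=
  IsDiffOp L ∧ ∀ P, matDeg (L P) = matDeg P

/-- Natural-number degree of a matrix polynomial. -/
noncomputable def matNatDeg (P : MatP n) : ℕ :=
  Finset.univ.sup fun ij : n × n => (P ij.1 ij.2).natDegree

/-- Leading coefficient of a matrix polynomial. -/
noncomputable def matLead (P : MatP n) : Matrix n n ℂ :=
  Matrix.of fun i j => (P i j).coeff (matNatDeg P)

/-- Evaluation of a matrix polynomial at a real point. -/
noncomputable def evalMP (P : MatP n) (x : ℝ) : Matrix n n ℂ :=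
  Matrix.of fun i j => (P i j).eval (x : ℂ)

/-- The matrix-valued inner product `⟨P,Q⟩ = ∫_S P(x) W(x) Q(x)^* dx`. -/
noncomputable def wInner (S : Set ℝ) (W : ℝ → Matrix n n ℂ) (P Q : MatP n) :
    Matrix n n ℂ :=
  Matrix.of fun i j => ∫ x in S, (evalMP P x * W x * (evalMP Q x)ᴴ) i j

/-- `W` is a weight matrix supported on `S`: positive definite on `S` with finite moments. -/
def IsWeight (S : Set ℝ) (W : ℝ → Matrix n n ℂ) : Prop :=
  MeasurableSet S ∧ volume S ≠ 0 ∧ (∀ x ∈ S, (W x).PosDef) ∧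
  ∀ (k : ℕ) (i j : n), IntegrableOn (fun x => ‖W x i j‖ * |x| ^ k) S

/-- `P` is the sequence of monic orthogonal matrix polynomials for the weight `W` on `S`. -/
def MonicOPS (S : Set ℝ) (W : ℝ → Matrix n n ℂ) (P : ℕ → MatP n) : Prop :=
  (∀ k, matNatDeg (P k) = k) ∧
  (∀ k, (Matrix.of fun i j => ((P k) i j).coeff k) = (1 : Matrix n n ℂ)) ∧
  (∀ k l, k ≠ l → wInner S W (P k) (P l) = 0)

/-- Membership in the algebra `D(W)`: a differential operator having the (monic orthogonal)
polynomials `P_k` as eigenfunctions with matrix eigenvalues. -/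
def InDW (P : ℕ → MatP n) (L : MatP n → MatP n) : Prop :=
  IsDiffOp L ∧ ∀ k, ∃ Λ : Matrix n n ℂ, L (P k) = Λ.map Polynomial.C * P k

/-- `Pt` (the monic OPS of `W̃`) is obtained from `P` (the monic OPS of `W`) by a Darboux
transformation: some `D = V N ∈ D(W)` with `V, N` degree-preserving and
`P_k · V = A_k P̃_k`, `A_k` nonsingular. -/
def IsDarbouxPair (P Pt : ℕ → MatP n) : Prop :=
  ∃ V Nd : MatP n → MatP n, DegPres V ∧ DegPres Nd ∧
    InDW P (fun Q => Nd (V Q)) ∧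
    ∀ k, ∃ A : Matrix n n ℂ, IsUnit A ∧ V (P k) = A.map Polynomial.C * Pt k

end MatFramework

section AuxLemmas
variable {n : Type*} [Fintype n] [DecidableEq n]

lemma derivIter_sum {ι : Type*} (j : ℕ) (s : Finset ι) (P : ι → MatP n) :
    derivIter j (∑ i ∈ s, P i) = ∑ i ∈ s, derivIter j (P i) := by
  ext a b : 1
  simp only [derivIter, Matrix.map_apply, Matrix.sum_apply]
  exact Polynomial.iterate_derivative_sum j s fun i => P i a b

lemma derivIter_derivIter (a b : ℕ) (P : MatP n) :
    derivIter a (derivIter b P) = derivIter (a + b) P := by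
  ext i l : 1
  simp only [derivIter, Matrix.map_apply]
  exact (Function.iterate_add_apply _ a b _).symm

lemma derivIter_mul (j : ℕ) (P Q : MatP n) :
    derivIter j (P * Q) =
      ∑ t ∈ Finset.range (j + 1), j.choose t • (derivIter (j - t) P * derivIter t Q) := by
  ext i l : 1
  simp only [derivIter, Matrix.map_apply, Matrix.mul_apply, Matrix.sum_apply,
    Matrix.smul_apply]
  rw [Polynomial.iterate_derivative_sum]
  have h : ∀ m : n, Polynomial.derivative^[j] (P i m * Q m l)
      = ∑ t ∈ Finset.range (j + 1), j.choose t •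
          (Polynomial.derivative^[j - t] (P i m) * Polynomial.derivative^[t] (Q m l)) :=
    fun m => Polynomial.iterate_derivative_mul _ _
  simp only [h, Finset.smul_sum]
  exact Finset.sum_comm

lemma derivIter_constMul (j : ℕ) (A : Matrix n n ℂ) (Q : MatP n) :
    derivIter j (A.map Polynomial.C * Q) = A.map Polynomial.C * derivIter j Q := by
  ext i l : 1
  simp only [derivIter, Matrix.map_apply, Matrix.mul_apply]
  rw [Polynomial.iterate_derivative_sum]
  exact Finset.sum_congr rfl fun m _ => Polynomial.iterate_derivative_C_mul _ _ _

lemma actOp_constMul (F : ℕ →₀ MatP n) (A : Matrix n n ℂ) (Q : MatP n) :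
    actOp F (A.map Polynomial.C * Q) = A.map Polynomial.C * actOp F Q := by
  simp only [actOp, Finsupp.sum, Finset.mul_sum]
  exact Finset.sum_congr rfl fun j _ => by rw [derivIter_constMul, mul_assoc]

lemma actOp_single (k : ℕ) (G : MatP n) (P : MatP n) :
    actOp (Finsupp.single k G) P = derivIter k P * G := by
  rw [actOp]
  exact Finsupp.sum_single_index (mul_zero _)

lemma actOp_Fadd (F G : ℕ →₀ MatP n) (P : MatP n) :
    actOp (F + G) P = actOp F P + actOp G P := by
  unfold actOp
  exact Finsupp.sum_add_index' (fun j => mul_zero _) (fun j a b => mul_add _ _ _)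

lemma actOp_Fsum {ι : Type*} (s : Finset ι) (H : ι → (ℕ →₀ MatP n)) (P : MatP n) :
    actOp (∑ i ∈ s, H i) P = ∑ i ∈ s, actOp (H i) P := by
  classical
  induction s using Finset.induction_on with
  | empty => simp [actOp]
  | insert _ _ hnot ih =>
      rw [Finset.sum_insert hnot, Finset.sum_insert hnot, actOp_Fadd, ih]

lemma isDiffOp_comp {L M : MatP n → MatP n} (hL : IsDiffOp L) (hM : IsDiffOp M) :
    IsDiffOp fun P => M (L P) := by
  obtain ⟨F, hF⟩ := hL
  obtain ⟨G, hG⟩ := hM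
  refine ⟨∑ j ∈ G.support, ∑ i ∈ F.support, ∑ t ∈ Finset.range (j + 1),
      Finsupp.single ((j - t) + i) (j.choose t • (derivIter t (F i) * G j)), fun P => ?_⟩
  show M (L P) = _
  rw [hF, hG]
  calc actOp G (actOp F P)
      = ∑ j ∈ G.support, derivIter j (∑ i ∈ F.support, derivIter i P * F i) * G j := by
        simp only [actOp, Finsupp.sum]
    _ = ∑ j ∈ G.support, ∑ i ∈ F.support, ∑ t ∈ Finset.range (j + 1),
          derivIter ((j - t) + i) P * (j.choose t • (derivIter t (F i) * G j)) := by
        refine Finset.sum_congr rfl fun j _ => ?_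
        rw [derivIter_sum, Finset.sum_mul]
        refine Finset.sum_congr rfl fun i _ => ?_
        rw [derivIter_mul, Finset.sum_mul]
        refine Finset.sum_congr rfl fun t _ => ?_
        rw [derivIter_derivIter, smul_mul_assoc, mul_assoc, ← mul_smul_comm]
    _ = actOp (∑ j ∈ G.support, ∑ i ∈ F.support, ∑ t ∈ Finset.range (j + 1),
          Finsupp.single ((j - t) + i) (j.choose t • (derivIter t (F i) * G j))) P := by
        simp only [actOp_Fsum, actOp_single]

end AuxLemmas

/-- If `W̃` is a Darboux transformation of `W` via `D = V N ∈ D(W)`, then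
`D̃ = N V ∈ D(W̃)` and `W` is a Darboux transformation of `W̃`. -/
theorem stmt3 {n : Type*} [Fintype n] [DecidableEq n]
    (S : Set ℝ) (W Wt : ℝ → Matrix n n ℂ)
    (hW : IsWeight S W) (hWt : IsWeight S Wt)
    (P Pt : ℕ → MatP n) (hP : MonicOPS S W P) (hPt : MonicOPS S Wt Pt)
    (V Nd : MatP n → MatP n) (hV : DegPres V) (hN : DegPres Nd)
    (hD : InDW P (fun Q => Nd (V Q)))
    (hA : ∀ k, ∃ A : Matrix n n ℂ, IsUnit A ∧ V (P k) = A.map Polynomial.C * Pt k) :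
    InDW Pt (fun Q => V (Nd Q)) ∧ IsDarbouxPair Pt P := by
  classical
  -- the index type is nonempty (otherwise `matNatDeg (P 1) = 1` fails)
  have hne : Nonempty n := by
    by_contra h
    have hempty : IsEmpty n := not_nonempty_iff.mp h
    have h1 := hP.1 1
    simp [matNatDeg, Finset.univ_eq_empty] at h1
  obtain ⟨i0⟩ := hne
  -- constant matrices pull out of differential operators
  have hNconst : ∀ (M : Matrix n n ℂ) (Q : MatP n),
      Nd (M.map Polynomial.C * Q) = M.map Polynomial.C * Nd Q := by
    obtain ⟨FN, hFN⟩ := hN.1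
    intro M Q; rw [hFN, hFN, actOp_constMul]
  have hVconst : ∀ (M : Matrix n n ℂ) (Q : MatP n),
      V (M.map Polynomial.C * Q) = M.map Polynomial.C * V Q := by
    obtain ⟨FV, hFV⟩ := hV.1
    intro M Q; rw [hFV, hFV, actOp_constMul]
  -- the key fact: `Nd (Pt k) = B_k * P k` with `B_k` invertible
  have key : ∀ k, ∃ B : Matrix n n ℂ, IsUnit B ∧ Nd (Pt k) = B.map Polynomial.C * P k := by
    intro k
    obtain ⟨A, hAu, hAe⟩ := hA k
    obtain ⟨Λ, hΛ⟩ := hD.2 k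
    have hΛ' : Nd (V (P k)) = Λ.map Polynomial.C * P k := hΛ
    have hstep : A.map Polynomial.C * Nd (Pt k) = Λ.map Polynomial.C * P k := by
      rw [← hNconst, ← hAe, hΛ']
    have hAiA : A⁻¹ * A = 1 := Matrix.nonsing_inv_mul A ((Matrix.isUnit_iff_isUnit_det A).mp hAu)
    have hNdPt : Nd (Pt k) = (A⁻¹ * Λ).map Polynomial.C * P k := by
      calc Nd (Pt k)
          = ((A⁻¹ * A).map Polynomial.C) * Nd (Pt k) := by
            rw [hAiA, Matrix.map_one _ (map_zero _) (map_one _), one_mul]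
        _ = (A⁻¹).map Polynomial.C * (A.map Polynomial.C * Nd (Pt k)) := by
            rw [Matrix.map_mul, mul_assoc]
        _ = (A⁻¹).map Polynomial.C * (Λ.map Polynomial.C * P k) := by rw [hstep]
        _ = (A⁻¹ * Λ).map Polynomial.C * P k := by rw [← mul_assoc, ← Matrix.map_mul]
    refine ⟨A⁻¹ * Λ, ?_, hNdPt⟩
    set B : Matrix n n ℂ := A⁻¹ * Λ with hB
    by_contra hBu
    have hdet : B.det = 0 := by
      by_contra hd
      exact hBu ((Matrix.isUnit_iff_isUnit_det B).mpr (isUnit_iff_ne_zero.mpr hd))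
    have hdetT : Bᵀ.det = 0 := by rw [Matrix.det_transpose]; exact hdet
    obtain ⟨v, hv0, hv⟩ := (Matrix.exists_mulVec_eq_zero_iff).mpr hdetT
    set M : Matrix n n ℂ := Matrix.of fun _ j => v j with hM
    have hMB : M * B = 0 := by
      ext i j
      have h1 : (Bᵀ *ᵥ v) j = 0 := by rw [hv]; rfl
      simp only [Matrix.mulVec, dotProduct, Matrix.transpose_apply] at h1
      simp only [Matrix.mul_apply, hM, Matrix.of_apply, Matrix.zero_apply]
      rw [← h1]
      exact Finset.sum_congr rfl fun l _ => mul_comm _ _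
    -- the operator kills `M * Pt k`, contradicting degree preservation
    have hNdQ : Nd (M.map Polynomial.C * Pt k) = 0 := by
      rw [hNconst, hNdPt, ← mul_assoc, ← Matrix.map_mul, hMB,
        Matrix.map_zero _ (map_zero _), zero_mul]
    have hdeg := hN.2 (M.map Polynomial.C * Pt k)
    rw [hNdQ] at hdeg
    have hbot : matDeg (M.map Polynomial.C * Pt k) = ⊥ := by
      rw [← hdeg]
      simp [matDeg]
    obtain ⟨j, hvj⟩ : ∃ j, v j ≠ 0 := by
      by_contra h; push_neg at h; exact hv0 (funext h)
    have hcoef : ∀ l j', ((Pt k) l j').coeff k = (1 : Matrix n n ℂ) l j' := by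
      intro l j'; rw [← hPt.2.1 k]; rfl
    have hQc : ((M.map Polynomial.C * Pt k) i0 j).coeff k = v j := by
      simp only [Matrix.mul_apply, Matrix.map_apply, Polynomial.finset_sum_coeff,
        Polynomial.coeff_C_mul, hcoef]
      simp [Matrix.one_apply, hM]
    have hQ0 : (M.map Polynomial.C * Pt k) i0 j = 0 := by
      have := (Finset.sup_eq_bot_iff _ _).mp hbot (i0, j) (Finset.mem_univ _)
      exact Polynomial.degree_eq_bot.mp this
    rw [hQ0] at hQc
    simp at hQc
    exact hvj hQc.symm
  -- assemble the conclusions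
  have hcomp : IsDiffOp (fun Q => V (Nd Q)) := isDiffOp_comp hN.1 hV.1
  have heig : ∀ k, ∃ Λ : Matrix n n ℂ, V (Nd (Pt k)) = Λ.map Polynomial.C * Pt k := by
    intro k
    obtain ⟨B, hBu, hBe⟩ := key k
    obtain ⟨A, hAu, hAe⟩ := hA k
    refine ⟨B * A, ?_⟩
    rw [hBe, hVconst, hAe, ← mul_assoc, ← Matrix.map_mul]
  exact ⟨⟨hcomp, heig⟩, Nd, V, hN, hV, ⟨hcomp, heig⟩, key⟩
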